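/- arXiv:2512.01227 — 2 statements merged into one kernel-verified Lean document; each statement's English description precedes it below -/
import Mathlib

section
/- For every n^d × n^d matrix M over a field F, the non-commutative set-multilinear formula size of the shifted tensor of M is at least PT-rank(M) / n^{d − log₂ d + 1}. -/
open Matrix BigOperators

/-- The `κ`-partial transpose of an `n^d × n^d` matrix (indexed by tuples in `[n]^d`). -/
def ptrans {F : Type*} [Field F] {n d : ℕ} (κ : Finset (Fin d))
    (M : Matrix (Fin d → Fin n) (Fin d → Fin n) F) :
    Matrix (Fin d → Fin n) (Fin d → Fin n) F :=
  fun i j => M (fun k => if k ∈ κ then j k else i k) (fun k => if k ∈ κ then i k else j k)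

/-- A matrix is PT-basic if some partial transpose of it has rank 1. -/
def IsPTBasic {F : Type*} [Field F] {n d : ℕ}
    (M : Matrix (Fin d → Fin n) (Fin d → Fin n) F) : Prop :=
  ∃ κ : Finset (Fin d), (ptrans κ M).rank = 1

/-- The PT-rank of `M`: the minimum number of PT-basic matrices summing to `M`. -/
noncomputable def PTrank {F : Type*} [Field F] {n d : ℕ}
    (M : Matrix (Fin d → Fin n) (Fin d → Fin n) F) : ℕ :=
  sInf { r | ∃ P : Fin r → Matrix (Fin d → Fin n) (Fin d → Fin n) F,
    (∀ i, IsPTBasic (P i)) ∧ M = ∑ i, P i }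
/-- Order-preserving tensor product of a tensor on the first `e` coordinates with a tensor
on the last `f` coordinates, `e + f = k`. -/
def splitMul {F : Type*} [Field F] (m e f k : ℕ) (h : e + f = k)
    (B : (Fin e → Fin m) → F) (C : (Fin f → Fin m) → F) : (Fin k → Fin m) → F :=
  fun x => B (fun t => x ⟨(t : ℕ), by have := t.isLt; omega⟩) *
    C (fun t => x ⟨e + (t : ℕ), by have := t.isLt; omega⟩)

open Classical in
/-- `HasNCF F m k A s`: the tensor `A : [m]^k → F` has a non-commutative set-multilinear
formula with `s` leaves — i.e. `s` is an achievable value of the inductively defined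
non-commutative set-multilinear formula size. -/
inductive HasNCF (F : Type*) [Field F] (m : ℕ) : (k : ℕ) → ((Fin k → Fin m) → F) → ℕ → Prop
  | leaf (A : (Fin 1 → Fin m) → F) : HasNCF F m 1 A (if A = 0 then 0 else 1)
  | node {k : ℕ} (hk : 2 ≤ k) {N : ℕ} (e f : Fin N → ℕ) (he : ∀ i, 1 ≤ e i)
      (hf : ∀ i, 1 ≤ f i) (hef : ∀ i, e i + f i = k)
      (B : (i : Fin N) → (Fin (e i) → Fin m) → F)
      (C : (i : Fin N) → (Fin (f i) → Fin m) → F)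
      (s t : Fin N → ℕ)
      (hB : ∀ i, HasNCF F m (e i) (B i) (s i))
      (hC : ∀ i, HasNCF F m (f i) (C i) (t i))
      (A : (Fin k → Fin m) → F)
      (hA : A = ∑ i, splitMul m (e i) (f i) k (hef i) (B i) (C i)) :
      HasNCF F m k A (∑ i, (s i + t i))

/-- The non-commutative set-multilinear formula size of a tensor `A : [m]^k → F`. -/
noncomputable def Lnc (F : Type*) [Field F] (m k : ℕ) (A : (Fin k → Fin m) → F) : ℕ :=
  sInf { s | HasNCF F m k A s }

/-- The shifted tensor of an `n^d × n^d` matrix `M`: the order-`(d+1)` tensor on `[n²]`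
with `ShiftedTensor(M)(⟨p,i_1⟩, ⟨j_1,i_2⟩, …, ⟨j_d,q⟩) = 1[p = q = 1] · M_{i⃗,j⃗}`,
using the pairing bijection `Fin n × Fin n ≃ Fin (n*n)`. -/
noncomputable def shifted {F : Type*} [Field F] {n d : ℕ} [NeZero n]
    (M : Matrix (Fin d → Fin n) (Fin d → Fin n) F) : (Fin (d + 1) → Fin (n * n)) → F :=
  fun y =>
    if (finProdFinEquiv.symm (y 0)).1 = 0 ∧ (finProdFinEquiv.symm (y (Fin.last d))).2 = 0
    then
      M (fun k => (finProdFinEquiv.symm (y (Fin.castSucc k))).2)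
        (fun k => (finProdFinEquiv.symm (y k.succ)).1)
    else 0

open Matrix BigOperators

section PieceTheory

variable {F : Type*} [Field F] {n : ℕ}

/-- first half (the "column/j" component) of a coordinate value. -/
def fsth {n k : ℕ} (x : Fin k → Fin (n * n)) (t : Fin k) : Fin n :=
  (finProdFinEquiv.symm (x t)).1

/-- second half (the "row/i" component). -/
def sndh {n k : ℕ} (x : Fin k → Fin (n * n)) (t : Fin k) : Fin n :=
  (finProdFinEquiv.symm (x t)).2

/-- `x` and `y` agree on all halves assigned side `w` by (`sa`,`sb`). -/
def Agrees {n : ℕ} (k : ℕ) (sa sb : Fin k → Bool) (w : Bool)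
    (x y : Fin k → Fin (n * n)) : Prop :=
  ∀ t : Fin k, (sa t = w → fsth x t = fsth y t) ∧ (sb t = w → sndh x t = sndh y t)

def DepOn {F : Type*} [Field F] {n : ℕ} (k : ℕ) (sa sb : Fin k → Bool) (w : Bool)
    (u : (Fin k → Fin (n * n)) → F) : Prop :=
  ∀ x y, Agrees k sa sb w x y → u x = u y

/-- side assignment legal for boundary signs σ τ : every "shifted pair"
`(sndh t, fsth (t+1))` is split between the two sides, the first `fsth`-half has
side σ and the last `sndh`-half has side τ. -/
def LegalSides (k : ℕ) (σ τ : Bool) (sa sb : Fin k → Bool) : Prop :=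
  (∀ h : 0 < k, sa ⟨0, h⟩ = σ) ∧ (∀ h : 0 < k, sb ⟨k - 1, by omega⟩ = τ) ∧
    (∀ (t : ℕ) (h : t + 1 < k), sb ⟨t, by omega⟩ ≠ sa ⟨t + 1, h⟩)

def BasicT (F : Type*) [Field F] (n k : ℕ) (σ τ : Bool)
    (P : (Fin k → Fin (n * n)) → F) : Prop :=
  ∃ sa sb : Fin k → Bool, LegalSides k σ τ sa sb ∧
    ∃ u v : (Fin k → Fin (n * n)) → F,
      DepOn k sa sb true u ∧ DepOn k sa sb false v ∧ P = fun x => u x * v x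

/-- `X` is a sum of `r` basic pieces with boundary sides σ, τ. -/
def OKC (F : Type*) [Field F] (n k : ℕ) (σ τ : Bool)
    (X : (Fin k → Fin (n * n)) → F) (r : ℕ) : Prop :=
  ∃ P : Fin r → (Fin k → Fin (n * n)) → F,
    (∀ l, BasicT F n k σ τ (P l)) ∧ X = ∑ l, P l

lemma basicT_zero (σ τ : Bool) {k : ℕ} (hk : 0 < k) :
    BasicT F n k σ τ (0 : (Fin k → Fin (n * n)) → F) := by
  refine ⟨fun t => if t.1 = 0 then σ else !τ, fun _ => τ, ⟨?_, ?_, ?_⟩,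
    0, 1, ?_, ?_, ?_⟩
  · intro h; simp
  · intro h; rfl
  · intro t h
    have : t + 1 ≠ 0 := by omega
    simp only [this, if_neg this]
    cases τ <;> simp
  · intro x y _; rfl
  · intro x y _; rfl
  · funext x; simp

lemma okc_zero (σ τ : Bool) {k : ℕ} :
    OKC F n k σ τ (0 : (Fin k → Fin (n * n)) → F) 0 :=
  ⟨Fin.elim0, fun l => l.elim0, by simp⟩

lemma okc_mono {σ τ : Bool} {k : ℕ} (hk : 0 < k)
    {X : (Fin k → Fin (n * n)) → F} {r r' : ℕ} (hrr : r ≤ r')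
    (h : OKC F n k σ τ X r) : OKC F n k σ τ X r' := by
  obtain ⟨P, hP, hX⟩ := h
  obtain ⟨m, rfl⟩ : ∃ m, r' = r + m := ⟨r' - r, by omega⟩
  refine ⟨Fin.append P (fun _ => 0), ?_, ?_⟩
  · intro l
    induction l using Fin.addCases with
    | left l => rw [Fin.append_left]; exact hP l
    | right l => rw [Fin.append_right]; exact basicT_zero σ τ hk
  · rw [hX, Fin.sum_univ_add]
    simp [Fin.append_left, Fin.append_right]

lemma okc_add {σ τ : Bool} {k : ℕ}
    {X Y : (Fin k → Fin (n * n)) → F} {r r' : ℕ}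
    (h : OKC F n k σ τ X r) (h' : OKC F n k σ τ Y r') :
    OKC F n k σ τ (X + Y) (r + r') := by
  obtain ⟨P, hP, hX⟩ := h
  obtain ⟨Q, hQ, hY⟩ := h'
  refine ⟨Fin.append P Q, ?_, ?_⟩
  · intro l
    induction l using Fin.addCases with
    | left l => rw [Fin.append_left]; exact hP l
    | right l => rw [Fin.append_right]; exact hQ l
  · rw [hX, hY, Fin.sum_univ_add]
    simp [Fin.append_left, Fin.append_right]

lemma okc_sum {σ τ : Bool} {k : ℕ} (N : ℕ)
    (Xs : Fin N → (Fin k → Fin (n * n)) → F) (rs : Fin N → ℕ)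
    (h : ∀ i, OKC F n k σ τ (Xs i) (rs i)) :
    OKC F n k σ τ (∑ i, Xs i) (∑ i, rs i) := by
  induction N with
  | zero => simpa using okc_zero σ τ
  | succ N ih =>
    rw [Fin.sum_univ_castSucc, Fin.sum_univ_castSucc (f := rs)]
    exact okc_add (ih _ _ (fun i => h i.castSucc)) (h (Fin.last N))

/-- flip both sides. -/
lemma okc_flip {σ τ : Bool} {k : ℕ} {X : (Fin k → Fin (n * n)) → F} {r : ℕ}
    (h : OKC F n k σ τ X r) : OKC F n k (!σ) (!τ) X r := by
  obtain ⟨P, hP, hX⟩ := h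
  refine ⟨P, fun l => ?_, hX⟩
  obtain ⟨sa, sb, ⟨hL1, hL2, hL3⟩, u, v, hu, hv, hP⟩ := hP l
  refine ⟨fun t => !(sa t), fun t => !(sb t), ⟨?_, ?_, ?_⟩, v, u, ?_, ?_, ?_⟩
  · intro h; simp only [hL1 h]
  · intro h; simp only [hL2 h]
  · intro t h
    have := hL3 t h
    simp only [ne_eq, Bool.not_inj_iff]
    exact this
  · intro x y hxy
    refine hv x y (fun t => ?_)
    obtain ⟨h1, h2⟩ := hxy t
    constructor
    · intro h; exact h1 (by simp [h])
    · intro h; exact h2 (by simp [h])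
  · intro x y hxy
    refine hu x y (fun t => ?_)
    obtain ⟨h1, h2⟩ := hxy t
    constructor
    · intro h; exact h1 (by simp [h])
    · intro h; exact h2 (by simp [h])
  · funext x; rw [hP]; exact (mul_comm _ _)

end PieceTheory
section PieceTheory2

variable {F : Type*} [Field F] {n : ℕ}

lemma coord_eq {k : ℕ} (x : Fin k → Fin (n * n)) (t : Fin k) :
    finProdFinEquiv (fsth x t, sndh x t) = x t := by
  have h : (fsth x t, sndh x t) = finProdFinEquiv.symm (x t) := rfl
  rw [h, Equiv.apply_symm_apply]

lemma fun_eq_of_halves {k : ℕ} {x y : Fin k → Fin (n * n)}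
    (h : ∀ t, fsth x t = fsth y t ∧ sndh x t = sndh y t) : x = y := by
  funext t
  rw [← coord_eq x t, ← coord_eq y t, (h t).1, (h t).2]

lemma okc_leaf_same (σ : Bool) (X : (Fin 1 → Fin (n * n)) → F) :
    OKC F n 1 σ σ X 1 := by
  have hdep : DepOn (F := F) (n := n) 1 (fun _ => σ) (fun _ => σ) σ X := by
    intro x y hxy
    have : x = y := fun_eq_of_halves fun t => ⟨(hxy t).1 rfl, (hxy t).2 rfl⟩
    rw [this]
  have hdep1 : ∀ w, DepOn (F := F) (n := n) 1 (fun _ => σ) (fun _ => σ) w 1 := by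
    intro w x y _; rfl
  have hleg : LegalSides 1 σ σ (fun _ => σ) (fun _ => σ) :=
    ⟨fun _ => rfl, fun _ => rfl, fun t h => absurd h (by omega)⟩
  refine ⟨fun _ => X, fun l => ?_, by simp⟩
  cases σ with
  | true => exact ⟨_, _, hleg, X, 1, hdep, hdep1 false, by funext x; simp⟩
  | false => exact ⟨_, _, hleg, 1, X, hdep1 true, hdep, by funext x; simp⟩

lemma okc_leaf_diff_tf (X : (Fin 1 → Fin (n * n)) → F) :
    OKC F n 1 true false X n := by
  classical
  refine ⟨fun β x => X (fun _ => finProdFinEquiv (fsth x 0, β)) *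
    (if sndh x 0 = β then 1 else 0), fun β => ?_, ?_⟩
  · refine ⟨fun _ => true, fun _ => false,
      ⟨fun _ => rfl, fun _ => rfl, fun t h => absurd h (by omega)⟩,
      fun x => X (fun _ => finProdFinEquiv (fsth x 0, β)),
      fun x => (if sndh x 0 = β then 1 else 0), ?_, ?_, rfl⟩
    · intro x y hxy
      dsimp only
      rw [(hxy 0).1 rfl]
    · intro x y hxy
      dsimp only
      rw [(hxy 0).2 rfl]
  · funext x
    rw [Finset.sum_apply]
    simp only [mul_ite, mul_one, mul_zero]
    have : ∀ β : Fin n, (if sndh x 0 = β then X (fun _ => finProdFinEquiv (fsth x 0, β)) else 0)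
        = (if sndh x 0 = β then X (fun _ => finProdFinEquiv (fsth x 0, sndh x 0)) else 0) := by
      intro β
      by_cases h : sndh x 0 = β
      · rw [if_pos h, if_pos h, h]
      · rw [if_neg h, if_neg h]
    rw [Finset.sum_congr rfl (fun β _ => this β), Finset.sum_ite_eq]
    have hx : (fun _ : Fin 1 => finProdFinEquiv (fsth x 0, sndh x 0)) = x := by
      funext t
      have ht : t = 0 := Subsingleton.elim t 0
      rw [ht, coord_eq]
    simp [hx]

lemma okc_leaf_diff (σ : Bool) (X : (Fin 1 → Fin (n * n)) → F) :
    OKC F n 1 σ (!σ) X n := by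
  cases σ with
  | true => exact okc_leaf_diff_tf X
  | false => simpa using okc_flip (okc_leaf_diff_tf X)

end PieceTheory2
section CapLemmas

variable {F : Type*} [Field F] {n : ℕ}

/-- cap for equal boundary sides: any order-`k` tensor is a sum of `n^(k-1)`
(true,true)-basic pieces. -/
lemma okc_cap_same_tt {k : ℕ} (hk : 0 < k) (X : (Fin k → Fin (n * n)) → F) :
    OKC F n k true true X (n ^ (k - 1)) := by
  classical
  -- substitution of the `fsth`-halves at positions ≥ 1 by `w`
  let sub : (Fin k → Fin (n * n)) → (Fin (k - 1) → Fin n) → (Fin k → Fin (n * n)) :=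
    fun x w t => if h : t.1 = 0 then x t
      else finProdFinEquiv (w ⟨t.1 - 1, by omega⟩, sndh x t)
  let piece : (Fin (k - 1) → Fin n) → (Fin k → Fin (n * n)) → F :=
    fun w x => X (sub x w) *
      (if (∀ t : Fin (k - 1), fsth x ⟨t.1 + 1, by omega⟩ = w t) then 1 else 0)
  refine ⟨fun l => piece (finFunctionFinEquiv.symm l), fun l => ?_, ?_⟩
  · refine ⟨fun t => decide (t.1 = 0), fun _ => true,
      ⟨fun h => by simp, fun h => rfl, fun t h => by simp⟩,
      fun x => X (sub x (finFunctionFinEquiv.symm l)),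
      fun x => (if (∀ t : Fin (k - 1), fsth x ⟨t.1 + 1, by omega⟩ =
        finFunctionFinEquiv.symm l t) then 1 else 0), ?_, ?_, rfl⟩
    · intro x y hxy
      dsimp only
      have hsub : sub x (finFunctionFinEquiv.symm l) = sub y (finFunctionFinEquiv.symm l) := by
        funext t
        by_cases h0 : t.1 = 0
        · have h1 : fsth x t = fsth y t := (hxy t).1 (by simp [h0])
          have h2 : sndh x t = sndh y t := (hxy t).2 rfl
          have : x t = y t := by rw [← coord_eq x t, ← coord_eq y t, h1, h2]
          simp only [sub, dif_pos h0, this]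
        · have h2 : sndh x t = sndh y t := (hxy t).2 rfl
          simp only [sub, dif_neg h0, h2]
      rw [hsub]
    · intro x y hxy
      dsimp only
      have hcond : (∀ t : Fin (k - 1), fsth x ⟨t.1 + 1, by omega⟩ =
          finFunctionFinEquiv.symm l t) ↔ (∀ t : Fin (k - 1), fsth y ⟨t.1 + 1, by omega⟩ =
          finFunctionFinEquiv.symm l t) := by
        apply forall_congr'
        intro t
        have : fsth x ⟨t.1 + 1, by omega⟩ = fsth y ⟨t.1 + 1, by omega⟩ :=
          (hxy ⟨t.1 + 1, by omega⟩).1 (by simp)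
        rw [this]
      by_cases h : (∀ t : Fin (k - 1), fsth x ⟨t.1 + 1, by omega⟩ =
          finFunctionFinEquiv.symm l t)
      · rw [if_pos h, if_pos (hcond.1 h)]
      · rw [if_neg h, if_neg (fun hy => h (hcond.2 hy))]
  · funext x
    rw [Finset.sum_apply]
    rw [show (∑ l : Fin (n ^ (k - 1)), piece (finFunctionFinEquiv.symm l) x)
      = ∑ w : Fin (k - 1) → Fin n, piece w x from
      Equiv.sum_comp finFunctionFinEquiv.symm (fun w => piece w x)]
    set w₀ : Fin (k - 1) → Fin n := fun t => fsth x ⟨t.1 + 1, by omega⟩ with hw₀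
    have hcond : ∀ w : Fin (k - 1) → Fin n,
        (if (∀ t : Fin (k - 1), fsth x ⟨t.1 + 1, by omega⟩ = w t) then (1:F) else 0)
        = if w₀ = w then 1 else 0 := by
      intro w
      by_cases h : (∀ t : Fin (k - 1), fsth x ⟨t.1 + 1, by omega⟩ = w t)
      · rw [if_pos h, if_pos (funext h)]
      · rw [if_neg h, if_neg ?_]
        intro he; exact h (fun t => congrFun he t)
    have : ∀ w : Fin (k - 1) → Fin n, piece w x
        = if w₀ = w then X (sub x w) else 0 := by
      intro w
      show X (sub x w) * _ = _
      rw [hcond w, mul_ite, mul_one, mul_zero]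
    rw [Finset.sum_congr rfl (fun w _ => this w), Finset.sum_ite_eq]
    have hsub0 : sub x w₀ = x := by
      funext t
      by_cases h0 : t.1 = 0
      · simp only [sub, dif_pos h0]
      · have ht : (⟨t.1 - 1 + 1, by omega⟩ : Fin k) = t := by
          apply Fin.ext; simp; omega
        simp only [sub, dif_neg h0]
        have hw : w₀ ⟨t.1 - 1, by omega⟩ = fsth x t := by
          simp only [hw₀]
          exact congrArg (fsth x) ht
        rw [hw, coord_eq]
    simp [hsub0]

lemma okc_cap_same {k : ℕ} (hk : 0 < k) (σ : Bool) (X : (Fin k → Fin (n * n)) → F) :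
    OKC F n k σ σ X (n ^ (k - 1)) := by
  cases σ with
  | true => exact okc_cap_same_tt hk X
  | false => simpa using okc_flip (okc_cap_same_tt hk X)

/-- cap for different boundary sides: `n^k` pieces. -/
lemma okc_cap_diff_tf {k : ℕ} (hk : 0 < k) (X : (Fin k → Fin (n * n)) → F) :
    OKC F n k true false X (n ^ k) := by
  classical
  let sub : (Fin k → Fin (n * n)) → (Fin k → Fin n) → (Fin k → Fin (n * n)) :=
    fun x w t => finProdFinEquiv ((if t.1 = 0 then fsth x t else w t),
      (if t.1 = k - 1 then w ⟨0, hk⟩ else sndh x t))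
  let cond : (Fin k → Fin (n * n)) → (Fin k → Fin n) → Prop :=
    fun x w => ∀ t : Fin k, (t.1 ≠ 0 → fsth x t = w t) ∧ (t.1 = k - 1 → sndh x t = w ⟨0, hk⟩)
  let piece : (Fin k → Fin n) → (Fin k → Fin (n * n)) → F :=
    fun w x => X (sub x w) * (if cond x w then 1 else 0)
  refine ⟨fun l => piece (finFunctionFinEquiv.symm l), fun l => ?_, ?_⟩
  · refine ⟨fun t => decide (t.1 = 0), fun t => decide (t.1 ≠ k - 1),
      ⟨fun h => by simp, fun h => by simp, fun t h => by simp [decide_eq_decide]; omega⟩,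
      fun x => X (sub x (finFunctionFinEquiv.symm l)),
      fun x => (if cond x (finFunctionFinEquiv.symm l) then 1 else 0), ?_, ?_, rfl⟩
    · intro x y hxy
      dsimp only
      have hsub : sub x (finFunctionFinEquiv.symm l) = sub y (finFunctionFinEquiv.symm l) := by
        funext t
        by_cases h0 : t.1 = 0 <;> by_cases hl : t.1 = k - 1
        · simp only [sub, if_pos h0, if_pos hl, (hxy t).1 (by simp [h0])]
        · simp only [sub, if_pos h0, if_neg hl, (hxy t).1 (by simp [h0]),
            (hxy t).2 (by simp [hl])]
        · simp only [sub, if_neg h0, if_pos hl]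
        · simp only [sub, if_neg h0, if_neg hl, (hxy t).2 (by simp [hl])]
      rw [hsub]
    · intro x y hxy
      dsimp only
      have hcond : cond x (finFunctionFinEquiv.symm l) ↔ cond y (finFunctionFinEquiv.symm l) := by
        apply forall_congr'
        intro t
        constructor
        · rintro ⟨h1, h2⟩
          refine ⟨fun ht => ?_, fun ht => ?_⟩
          · rw [← (hxy t).1 (by simp [ht]), h1 ht]
          · rw [← (hxy t).2 (by simp [ht]), h2 ht]
        · rintro ⟨h1, h2⟩
          refine ⟨fun ht => ?_, fun ht => ?_⟩
          · rw [(hxy t).1 (by simp [ht]), h1 ht]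
          · rw [(hxy t).2 (by simp [ht]), h2 ht]
      by_cases h : cond x (finFunctionFinEquiv.symm l)
      · rw [if_pos h, if_pos (hcond.1 h)]
      · rw [if_neg h, if_neg (fun hy => h (hcond.2 hy))]
  · funext x
    rw [Finset.sum_apply]
    rw [show (∑ l : Fin (n ^ k), piece (finFunctionFinEquiv.symm l) x)
      = ∑ w : Fin k → Fin n, piece w x from
      Equiv.sum_comp finFunctionFinEquiv.symm (fun w => piece w x)]
    set w₀ : Fin k → Fin n :=
      fun t => if t.1 = 0 then sndh x ⟨k - 1, by omega⟩ else fsth x t with hw₀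
    have hcond : ∀ w, cond x w ↔ w₀ = w := by
      intro w
      constructor
      · intro h
        funext t
        by_cases h0 : t.1 = 0
        · have ht0 : t = ⟨0, hk⟩ := Fin.ext h0
          have h1 := (h ⟨k - 1, by omega⟩).2 rfl
          have h2 : w₀ t = sndh x ⟨k - 1, by omega⟩ := by simp [hw₀, h0]
          rw [h2, h1, ht0]
        · simp only [hw₀, if_neg h0]
          exact (h t).1 h0
      · rintro rfl t
        refine ⟨fun ht => by simp [hw₀, ht], fun ht => ?_⟩
        have ht' : t = ⟨k - 1, by omega⟩ := Fin.ext ht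
        rw [ht']
        simp [hw₀]
    have hpiece : ∀ w, piece w x = if w₀ = w then X (sub x w) else 0 := by
      intro w
      show X (sub x w) * (if cond x w then 1 else 0) = _
      by_cases h : cond x w
      · rw [if_pos h, if_pos ((hcond w).1 h), mul_one]
      · rw [if_neg h, if_neg (fun he => h ((hcond w).2 he)), mul_zero]
    rw [Finset.sum_congr rfl (fun w _ => hpiece w), Finset.sum_ite_eq]
    have hsub0 : sub x w₀ = x := by
      funext t
      have h1 : (if t.1 = 0 then fsth x t else w₀ t) = fsth x t := by
        by_cases h0 : t.1 = 0
        · rw [if_pos h0]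
        · rw [if_neg h0]; simp [hw₀, h0]
      have h2 : (if t.1 = k - 1 then w₀ ⟨0, hk⟩ else sndh x t) = sndh x t := by
        by_cases hl : t.1 = k - 1
        · rw [if_pos hl]
          have ht' : t = ⟨k - 1, by omega⟩ := Fin.ext hl
          rw [ht']
          simp [hw₀]
        · rw [if_neg hl]
      simp only [sub, h1, h2, coord_eq]
    simp [hsub0]

lemma okc_cap_diff {k : ℕ} (hk : 0 < k) (σ : Bool) (X : (Fin k → Fin (n * n)) → F) :
    OKC F n k σ (!σ) X (n ^ k) := by
  cases σ with
  | true => exact okc_cap_diff_tf hk X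
  | false => simpa using okc_flip (okc_cap_diff_tf hk X)

end CapLemmas
section ProductLemma

variable {F : Type*} [Field F] {n : ℕ}

/-- composing basic decompositions across a split. The right boundary side of the left
factor must be opposite to the left boundary side of the right factor. -/
lemma okc_mul {e f k : ℕ} (he : 1 ≤ e) (hf : 1 ≤ f) (hef : e + f = k)
    (σ c τ : Bool) (B : (Fin e → Fin (n * n)) → F) (C : (Fin f → Fin (n * n)) → F)
    {rB rC : ℕ} (hB : OKC F n e σ c B rB) (hC : OKC F n f (!c) τ C rC) :
    OKC F n k σ τ (splitMul (n * n) e f k hef B C) (rB * rC) := by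
  obtain ⟨PB, hPB, hBsum⟩ := hB
  obtain ⟨PC, hPC, hCsum⟩ := hC
  -- front and back restriction maps
  let front : (Fin k → Fin (n * n)) → (Fin e → Fin (n * n)) :=
    fun x t => x ⟨(t : ℕ), by have := t.isLt; omega⟩
  let back : (Fin k → Fin (n * n)) → (Fin f → Fin (n * n)) :=
    fun x t => x ⟨e + (t : ℕ), by have := t.isLt; omega⟩
  let Q : Fin rB × Fin rC → (Fin k → Fin (n * n)) → F :=
    fun l x => PB l.1 (front x) * PC l.2 (back x)
  refine ⟨fun l => Q (finProdFinEquiv.symm l), fun l => ?_, ?_⟩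
  · -- each piece is basic
    obtain ⟨l1, l2⟩ : Fin rB × Fin rC := finProdFinEquiv.symm l
    show BasicT F n k σ τ (Q (finProdFinEquiv.symm l))
    obtain ⟨saB, sbB, ⟨hBL1, hBL2, hBL3⟩, uB, vB, huB, hvB, hPBe⟩ := hPB (finProdFinEquiv.symm l).1
    obtain ⟨saC, sbC, ⟨hCL1, hCL2, hCL3⟩, uC, vC, huC, hvC, hPCe⟩ := hPC (finProdFinEquiv.symm l).2
    refine ⟨fun t => if h : t.1 < e then saB ⟨t.1, h⟩ else saC ⟨t.1 - e, by have := t.isLt; omega⟩,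
      fun t => if h : t.1 < e then sbB ⟨t.1, h⟩ else sbC ⟨t.1 - e, by have := t.isLt; omega⟩,
      ⟨?_, ?_, ?_⟩,
      fun x => uB (front x) * uC (back x), fun x => vB (front x) * vC (back x),
      ?_, ?_, ?_⟩
    · intro h
      have h0 : (0 : ℕ) < e := he
      simp only [dif_pos h0]
      exact hBL1 h0
    · intro h
      have h1 : ¬ (k - 1 < e) := by omega
      simp only [dif_neg h1]
      have : k - 1 - e = f - 1 := by omega
      rw [show (⟨k - 1 - e, by omega⟩ : Fin f) = ⟨f - 1, by omega⟩ from Fin.ext (by simp; omega)]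
      exact hCL2 (by omega)
    · intro t h
      by_cases h1 : t + 1 < e
      · have h2 : t < e := by omega
        simp only [dif_pos h1, dif_pos h2]
        exact hBL3 t h1
      · by_cases h2 : t + 1 = e
        · have h3 : t < e := by omega
          simp only [dif_pos h3, dif_neg (show ¬ (t+1 < e) from h1)]
          have hb : sbB ⟨t, h3⟩ = c := by
            rw [show (⟨t, h3⟩ : Fin e) = ⟨e - 1, by omega⟩ from Fin.ext (by simp; omega)]
            exact hBL2 (by omega)
          have ha : saC ⟨t + 1 - e, by omega⟩ = !c := by
            rw [show (⟨t + 1 - e, by omega⟩ : Fin f) = ⟨0, by omega⟩ from Fin.ext (by simp; omega)]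
            exact hCL1 (by omega)
          rw [hb, ha]
          cases c <;> simp
        · have h3 : ¬ (t < e) := by omega
          simp only [dif_neg h1, dif_neg h3]
          have hC3 := hCL3 (t - e) (by omega)
          rw [show (⟨t + 1 - e, by omega⟩ : Fin f) = ⟨t - e + 1, by omega⟩ from
            Fin.ext (by simp; omega)]
          exact hC3
    · -- DepOn true for u
      intro x y hxy
      dsimp only
      have h1 : uB (front x) = uB (front y) := by
        apply huB
        intro t
        refine ⟨fun hs => ?_, fun hs => ?_⟩
        · exact (hxy ⟨t.1, by omega⟩).1 (by simp only [dif_pos t.isLt]; convert hs)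
        · exact (hxy ⟨t.1, by omega⟩).2 (by simp only [dif_pos t.isLt]; convert hs)
      have h2 : uC (back x) = uC (back y) := by
        apply huC
        intro t
        have hnl : ¬ ((⟨e + t.1, by omega⟩ : Fin k).1 < e) := by simp
        have hte : (⟨(⟨e + t.1, by omega⟩ : Fin k).1 - e, by omega⟩ : Fin f) = t :=
          Fin.ext (by simp)
        refine ⟨fun hs => ?_, fun hs => ?_⟩
        · exact (hxy ⟨e + t.1, by omega⟩).1
            (by simp only [dif_neg hnl]; rw [hte]; exact hs)
        · exact (hxy ⟨e + t.1, by omega⟩).2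
            (by simp only [dif_neg hnl]; rw [hte]; exact hs)
      rw [h1, h2]
    · -- DepOn false for v
      intro x y hxy
      dsimp only
      have h1 : vB (front x) = vB (front y) := by
        apply hvB
        intro t
        refine ⟨fun hs => ?_, fun hs => ?_⟩
        · exact (hxy ⟨t.1, by omega⟩).1 (by simp only [dif_pos t.isLt]; convert hs)
        · exact (hxy ⟨t.1, by omega⟩).2 (by simp only [dif_pos t.isLt]; convert hs)
      have h2 : vC (back x) = vC (back y) := by
        apply hvC
        intro t
        have hnl : ¬ ((⟨e + t.1, by omega⟩ : Fin k).1 < e) := by simp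
        have hte : (⟨(⟨e + t.1, by omega⟩ : Fin k).1 - e, by omega⟩ : Fin f) = t :=
          Fin.ext (by simp)
        refine ⟨fun hs => ?_, fun hs => ?_⟩
        · exact (hxy ⟨e + t.1, by omega⟩).1
            (by simp only [dif_neg hnl]; rw [hte]; exact hs)
        · exact (hxy ⟨e + t.1, by omega⟩).2
            (by simp only [dif_neg hnl]; rw [hte]; exact hs)
      rw [h1, h2]
    · -- factorization of the piece
      funext x
      show PB _ (front x) * PC _ (back x) = _
      rw [hPBe, hPCe]
      ring
  · -- sum identity
    funext x
    rw [Finset.sum_apply]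
    rw [show (∑ l : Fin (rB * rC), Q (finProdFinEquiv.symm l) x)
      = ∑ l : Fin rB × Fin rC, Q l x from Equiv.sum_comp finProdFinEquiv.symm (fun l => Q l x)]
    rw [Fintype.sum_prod_type]
    show splitMul (n * n) e f k hef B C x = _
    rw [splitMul, hBsum, hCsum]
    rw [Finset.sum_apply, Finset.sum_apply, Finset.sum_mul_sum]

end ProductLemma
section Penalty

/-- the exponent penalty: larger penalty = better bound. -/
def pen (σ τ : Bool) (k : ℕ) : ℕ :=
  if σ = τ then 2 * (Nat.clog 2 k / 2) + 1 else 2 * ((Nat.clog 2 k + 1) / 2)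

lemma clog_le_pred {k : ℕ} (hk : 1 ≤ k) : Nat.clog 2 k ≤ k - 1 := by
  apply (Nat.clog_le_iff_le_pow one_lt_two).2
  have := Nat.lt_two_pow_self (n := k - 1)
  omega

lemma pen_le {σ τ : Bool} {k : ℕ} (hk : 1 ≤ k) : pen σ τ k ≤ k := by
  have h := clog_le_pred hk
  unfold pen; split <;> omega

lemma pen_swap (σ τ : Bool) (m : ℕ) : pen (!σ) τ m = pen σ (!τ) m := by
  cases σ <;> cases τ <;> simp [pen]

lemma pen_key {σ τ : Bool} {f k : ℕ} (hf : 1 ≤ f) (hfk : f < k) (h2f : k ≤ 2 * f) :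
    pen σ τ k ≤ pen (!σ) τ f + 1 := by
  have hk2 : 2 ≤ k := by omega
  have hck : 2 ^ (Nat.clog 2 k - 1) < k := by
    have := Nat.pow_pred_clog_lt_self one_lt_two (show 1 < k by omega)
    simpa [Nat.pred_eq_sub_one] using this
  have hcf : Nat.clog 2 k ≤ Nat.clog 2 f + 1 := by
    rcases le_or_gt (Nat.clog 2 k) 1 with h1 | h1
    · omega
    · have hpow : 2 ^ (Nat.clog 2 k - 2) < f := by
        have heq : 2 ^ (Nat.clog 2 k - 1) = 2 * 2 ^ (Nat.clog 2 k - 2) := by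
          rw [← pow_succ']
          congr 1
          omega
        omega
      have := (Nat.lt_clog_iff_pow_lt one_lt_two).2 hpow
      omega
  cases σ <;> cases τ <;> simp only [pen, Bool.not_true, Bool.not_false] <;> simp <;> omega

lemma hasNCF_one_le_k {F : Type*} [Field F] {m k : ℕ} {A : (Fin k → Fin m) → F} {s : ℕ}
    (h : HasNCF F m k A s) : 1 ≤ k := by
  cases h with
  | leaf => exact le_refl 1
  | node hk _ _ _ _ _ _ _ _ _ _ _ _ _ => omega

end Penalty

section MainInduction

variable {F : Type*} [Field F] {n : ℕ}

theorem okc_of_hasNCF (hn : 1 ≤ n) {k : ℕ} {X : (Fin k → Fin (n * n)) → F} {s : ℕ}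
    (h : HasNCF F (n * n) k X s) :
    ∀ σ τ : Bool, OKC F n k σ τ X (s * n ^ (k - pen σ τ k)) := by
  induction h with
  | leaf A =>
    intro σ τ
    by_cases hA : A = 0
    · subst hA
      simp only [eq_self_iff_true, if_true, zero_mul]
      exact okc_zero σ τ
    · rw [if_neg hA, one_mul]
      by_cases hστ : σ = τ
      · subst hστ
        have hp : pen σ σ 1 = 1 := by simp [pen, Nat.clog_one_right]
        rw [hp]
        simpa using okc_leaf_same σ A
      · have hτ : τ = !σ := by cases σ <;> cases τ <;> simp_all
        subst hτ
        have hp : pen σ (!σ) 1 = 0 := by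
          cases σ <;> simp [pen, Nat.clog_one_right]
        rw [hp]
        simpa using okc_leaf_diff σ A
  | node hk e f he hf hef B C s t hB hC A hA ihB ihC =>
    rename_i k' N
    intro σ τ
    subst hA
    rw [Finset.sum_mul]
    apply okc_sum
    intro i
    have hki : 0 < k' := by omega
    have hei := he i
    have hfi := hf i
    have hefi := hef i
    rcases le_or_gt (e i) (f i) with hcase | hcase
    · -- cap the left factor, IH on the right factor
      have h1 : OKC F n (e i) σ σ (B i) (n ^ (e i - 1)) := okc_cap_same (he i) σ (B i)
      have h2 : OKC F n (f i) (!σ) τ (C i) (t i * n ^ (f i - pen (!σ) τ (f i))) :=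
        ihC i (!σ) τ
      have h3 := okc_mul (he i) (hf i) (hef i) σ σ τ (B i) (C i) h1 h2
      apply okc_mono hki ?_ h3
      have hpenf : pen (!σ) τ (f i) ≤ f i := pen_le (hf i)
      have hpenk : pen σ τ k' ≤ pen (!σ) τ (f i) + 1 :=
        pen_key (hf i) (by omega) (by omega)
      calc n ^ (e i - 1) * (t i * n ^ (f i - pen (!σ) τ (f i)))
          = t i * n ^ ((e i - 1) + (f i - pen (!σ) τ (f i))) := by rw [pow_add]; ring
        _ ≤ (s i + t i) * n ^ (k' - pen σ τ k') := by
            apply Nat.mul_le_mul (by omega)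
            apply Nat.pow_le_pow_right hn
            omega
    · -- cap the right factor, IH on the left factor
      have h1 : OKC F n (e i) σ (!τ) (B i) (s i * n ^ (e i - pen σ (!τ) (e i))) :=
        ihB i σ (!τ)
      have h2 : OKC F n (f i) (!(!τ)) τ (C i) (n ^ (f i - 1)) := by
        rw [Bool.not_not]
        exact okc_cap_same (hf i) τ (C i)
      have h3 := okc_mul (he i) (hf i) (hef i) σ (!τ) τ (B i) (C i) h1 h2
      apply okc_mono hki ?_ h3
      have hpene : pen σ (!τ) (e i) ≤ e i := pen_le (he i)
      have hpenk : pen σ τ k' ≤ pen σ (!τ) (e i) + 1 := by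
        rw [← pen_swap]
        exact pen_key (he i) (by omega) (by omega)
      calc s i * n ^ (e i - pen σ (!τ) (e i)) * n ^ (f i - 1)
          = s i * n ^ ((e i - pen σ (!τ) (e i)) + (f i - 1)) := by rw [pow_add]; ring
        _ ≤ (s i + t i) * n ^ (k' - pen σ τ k') := by
            apply Nat.mul_le_mul (by omega)
            apply Nat.pow_le_pow_right hn
            omega

end MainInduction
section RankOne

variable {F : Type*} [Field F]

lemma rank_eq_one_of_ne_zero {I J : Type*} [Fintype I] [Fintype J] [DecidableEq J]
    (U : I → F) (V : J → F) (hne : (Matrix.of (fun i j => U i * V j) : Matrix I J F) ≠ 0) :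
    (Matrix.of (fun i j => U i * V j) : Matrix I J F).rank = 1 := by
  classical
  have hle : (Matrix.of (fun i j => U i * V j) : Matrix I J F).rank ≤ 1 := by
    have heq : (Matrix.of (fun i j => U i * V j) : Matrix I J F) = vecMulVec U V := rfl
    rw [heq, vecMulVec_eq Unit]
    refine le_trans (Matrix.rank_mul_le_left _ _) ?_
    simpa using Matrix.rank_le_card_width (Matrix.replicateCol Unit U)
  have hex : ∃ i0 j0, U i0 * V j0 ≠ 0 := by
    by_contra hcon
    push_neg at hcon
    apply hne
    ext i j
    exact hcon i j
  obtain ⟨i0, j0, hij⟩ := hex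
  have hne0 : (Matrix.of (fun i j => U i * V j) : Matrix I J F).rank ≠ 0 := by
    intro h0
    rw [Matrix.rank] at h0
    have hbot := Submodule.finrank_eq_zero.mp h0
    have hz := LinearMap.range_eq_bot.mp hbot
    have hmv : (Matrix.of (fun i j => U i * V j) : Matrix I J F).mulVec (Pi.single j0 1) = 0 := by
      rw [← Matrix.mulVecLin_apply, hz]
      rfl
    have := congrFun hmv i0
    simp only [Matrix.mulVec, dotProduct, Matrix.of_apply, Pi.single_apply, mul_ite, mul_one,
      mul_zero, Finset.sum_ite_eq', Finset.mem_univ, if_true, Pi.zero_apply] at this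
    exact hij this
  omega

end RankOne

section Extraction

variable {F : Type*} [Field F] {n d : ℕ} [NeZero n]

/-- evaluation point recovering `M i j` from the shifted tensor. -/
def yext {n d : ℕ} [NeZero n] (i j : Fin d → Fin n) : Fin (d + 1) → Fin (n * n) :=
  fun t => finProdFinEquiv
    ((if _ : t.1 = 0 then 0 else j ⟨t.1 - 1, by have := t.isLt; omega⟩),
     (if h : t.1 < d then i ⟨t.1, h⟩ else 0))

lemma fsth_yext (i j : Fin d → Fin n) (t : Fin (d + 1)) :
    fsth (yext i j) t
      = if _ : t.1 = 0 then 0 else j ⟨t.1 - 1, by have := t.isLt; omega⟩ := by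
  simp [fsth, yext]

lemma sndh_yext (i j : Fin d → Fin n) (t : Fin (d + 1)) :
    sndh (yext i j) t = if h : t.1 < d then i ⟨t.1, h⟩ else 0 := by
  simp [sndh, yext]

lemma shifted_yext (M : Matrix (Fin d → Fin n) (Fin d → Fin n) F) (i j : Fin d → Fin n) :
    shifted M (yext i j) = M i j := by
  have h1 : (finProdFinEquiv.symm (yext (n := n) i j 0)).1 = 0 := by
    have := fsth_yext i j 0
    simpa [fsth] using this
  have h2 : (finProdFinEquiv.symm (yext (n := n) i j (Fin.last d))).2 = 0 := by
    have := sndh_yext i j (Fin.last d)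
    simp only [sndh] at this
    rw [this]
    simp
  rw [shifted, if_pos ⟨h1, h2⟩]
  congr 1
  · funext k
    have := sndh_yext i j (Fin.castSucc k)
    simp only [sndh] at this
    rw [this, dif_pos (show (Fin.castSucc k).1 < d from k.isLt)]
    exact congrArg i (Fin.ext rfl)
  · funext k
    have := fsth_yext i j k.succ
    simp only [fsth] at this
    rw [this, dif_neg (show ¬ (k.succ.1 = 0) by simp)]
    congr 1

lemma ptrank_le_of_okc (M : Matrix (Fin d → Fin n) (Fin d → Fin n) F) {σ τ : Bool} {r : ℕ}
    (h : OKC F n (d + 1) σ τ (shifted M) r) : PTrank M ≤ r := by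
  classical
  obtain ⟨P, hP, hsum⟩ := h
  set Mat : Fin r → Matrix (Fin d → Fin n) (Fin d → Fin n) F :=
    fun l => Matrix.of fun i j => P l (yext i j) with hMat
  have hMsum : M = ∑ l, Mat l := by
    ext i j
    have h0 := congrFun hsum (yext i j)
    rw [shifted_yext] at h0
    rw [Matrix.sum_apply]
    rw [h0, Finset.sum_apply]
    rfl
  have hbasic : ∀ l, Mat l ≠ 0 → IsPTBasic (Mat l) := by
    intro l hne
    obtain ⟨sa, sb, ⟨hL1, hL2, hL3⟩, u, v, hu, hv, hPl⟩ := hP l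
    set κ : Finset (Fin d) := Finset.filter (fun a => sa a.succ = true) Finset.univ with hκ
    -- the partial transpose factorizes
    have hfact : ptrans κ (Mat l)
        = Matrix.of (fun i j => u (yext i i) * v (yext j j)) := by
      have hMab : ∀ a b, Mat l a b = u (yext a b) * v (yext a b) := by
        intro a b
        show P l (yext a b) = _
        rw [hPl]
      ext i j
      show Mat l (fun k => if k ∈ κ then j k else i k) (fun k => if k ∈ κ then i k else j k) = _
      rw [hMab]
      have hagu : u (yext (fun k => if k ∈ κ then j k else i k)
          (fun k => if k ∈ κ then i k else j k)) = u (yext i i) := by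
        apply hu
        intro t
        constructor
        · intro hst
          rw [fsth_yext, fsth_yext]
          by_cases h0 : t.1 = 0
          · rw [dif_pos h0, dif_pos h0]
          · rw [dif_neg h0, dif_neg h0]
            have hsucc : (⟨t.1 - 1, by have := t.isLt; omega⟩ : Fin d).succ = t :=
              Fin.ext (by simp; omega)
            have ha : (⟨t.1 - 1, by have := t.isLt; omega⟩ : Fin d) ∈ κ := by
              rw [hκ, Finset.mem_filter]
              exact ⟨Finset.mem_univ _, by rw [hsucc]; exact hst⟩
            rw [if_pos ha]
        · intro hst
          rw [sndh_yext, sndh_yext]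
          by_cases hdd : t.1 < d
          · rw [dif_pos hdd, dif_pos hdd]
            have hne' : sb ⟨t.1, by omega⟩ ≠ sa ⟨t.1 + 1, by omega⟩ := hL3 t.1 (by omega)
            have hbt : sb ⟨t.1, by omega⟩ = true := hst
            have hsa : sa ⟨t.1 + 1, by omega⟩ = false := by
              cases hq : sa ⟨t.1 + 1, by omega⟩ with
              | false => rfl
              | true => rw [hbt, hq] at hne'; exact absurd rfl hne'
            have hsucc : (⟨t.1, hdd⟩ : Fin d).succ = ⟨t.1 + 1, by omega⟩ := Fin.ext rfl
            have ha : (⟨t.1, hdd⟩ : Fin d) ∉ κ := by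
              rw [hκ, Finset.mem_filter]
              rw [hsucc]
              simp [hsa]
            rw [if_neg ha]
          · rw [dif_neg hdd, dif_neg hdd]
      have hagv : v (yext (fun k => if k ∈ κ then j k else i k)
          (fun k => if k ∈ κ then i k else j k)) = v (yext j j) := by
        apply hv
        intro t
        constructor
        · intro hst
          rw [fsth_yext, fsth_yext]
          by_cases h0 : t.1 = 0
          · rw [dif_pos h0, dif_pos h0]
          · rw [dif_neg h0, dif_neg h0]
            have hsucc : (⟨t.1 - 1, by have := t.isLt; omega⟩ : Fin d).succ = t :=
              Fin.ext (by simp; omega)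
            have ha : (⟨t.1 - 1, by have := t.isLt; omega⟩ : Fin d) ∉ κ := by
              rw [hκ, Finset.mem_filter]
              rw [hsucc]
              simp [hst]
            rw [if_neg ha]
        · intro hst
          rw [sndh_yext, sndh_yext]
          by_cases hdd : t.1 < d
          · rw [dif_pos hdd, dif_pos hdd]
            have hne' : sb ⟨t.1, by omega⟩ ≠ sa ⟨t.1 + 1, by omega⟩ := hL3 t.1 (by omega)
            have hbt : sb ⟨t.1, by omega⟩ = false := hst
            have hsa : sa ⟨t.1 + 1, by omega⟩ = true := by
              cases hq : sa ⟨t.1 + 1, by omega⟩ with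
              | true => rfl
              | false => rw [hbt, hq] at hne'; exact absurd rfl hne'
            have hsucc : (⟨t.1, hdd⟩ : Fin d).succ = ⟨t.1 + 1, by omega⟩ := Fin.ext rfl
            have ha : (⟨t.1, hdd⟩ : Fin d) ∈ κ := by
              rw [hκ, Finset.mem_filter]
              rw [hsucc]
              simp [hsa]
            rw [if_pos ha]
          · rw [dif_neg hdd, dif_neg hdd]
      rw [hagu, hagv]
      rfl
    refine ⟨κ, ?_⟩
    rw [hfact]
    apply rank_eq_one_of_ne_zero
    rw [← hfact]
    intro hzero
    apply hne
    have : ptrans κ (ptrans κ (Mat l)) = Mat l := by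
      ext i j
      show Mat l _ _ = Mat l i j
      congr 1 <;> funext k <;> by_cases hk : k ∈ κ <;> simp [ptrans, hk]
    rw [← this, hzero]
    ext i j
    simp [ptrans]
  -- filter out the zero pieces
  set S : Finset (Fin r) := Finset.filter (fun l => Mat l ≠ 0) Finset.univ with hS
  have hcard : S.card ≤ r := le_trans (Finset.card_filter_le _ _) (by simp)
  refine le_trans (Nat.sInf_le ?_) hcard
  refine ⟨fun l => Mat ((S.orderIsoOfFin rfl l) : Fin r),
    fun l => hbasic _ ?_, ?_⟩
  · exact (Finset.mem_filter.mp (S.orderIsoOfFin rfl l).2).2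
  · rw [hMsum]
    rw [show (∑ l : Fin S.card, Mat ((S.orderIsoOfFin rfl l) : Fin r))
        = ∑ l : {x // x ∈ S}, Mat l.1 from
      Equiv.sum_comp (S.orderIsoOfFin rfl).toEquiv (fun l : {x // x ∈ S} => Mat l.1)]
    rw [Finset.sum_coe_sort S (fun l => Mat l)]
    rw [hS]
    exact (Finset.sum_filter_of_ne (fun x _ hx => hx)).symm

end Extraction
section Existence

variable {F : Type*} [Field F]

lemma exists_hasNCF (m : ℕ) : ∀ k, 1 ≤ k → ∀ A : (Fin k → Fin m) → F,
    ∃ s, HasNCF F m k A s := by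
  intro k
  induction k with
  | zero => omega
  | succ k ih =>
    intro _ A
    by_cases hk0 : k = 0
    · subst hk0
      exact ⟨_, HasNCF.leaf A⟩
    · have hk1 : 1 ≤ k := by omega
      choose sfun hsfun using fun c : Fin m => ih hk1 (fun x => A (Fin.cons c x))
      classical
      set leafC : Fin m → (Fin 1 → Fin m) → F :=
        fun c x => if x 0 = c then 1 else 0 with hleafC
      refine ⟨_, HasNCF.node (k := k + 1) (by omega) (N := m) (fun _ => 1) (fun _ => k)
        (fun _ => le_refl 1) (fun _ => hk1) (fun _ => Nat.add_comm 1 k)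
        (fun c => leafC c) (fun c x => A (Fin.cons c x))
        (fun c => if leafC c = 0 then 0 else 1) sfun
        (fun c => HasNCF.leaf (leafC c)) hsfun A ?_⟩
      funext x
      rw [Finset.sum_apply]
      have hterm : ∀ c : Fin m,
          splitMul m 1 k (k + 1) (Nat.add_comm 1 k) (leafC c) (fun x => A (Fin.cons c x)) x
          = if x ⟨0, by omega⟩ = c then A x else 0 := by
        intro c
        show (if x ⟨0, by omega⟩ = c then (1:F) else 0) * A (Fin.cons c _) = _
        by_cases hc : x ⟨0, by omega⟩ = c
        · rw [if_pos hc, if_pos hc, one_mul]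
          congr 1
          subst hc
          funext t
          refine Fin.cases ?_ (fun a => ?_) t
          · rw [Fin.cons_zero]
            rfl
          · rw [Fin.cons_succ]
            exact congrArg x (Fin.ext (by simp [Nat.add_comm]))
        · rw [if_neg hc, if_neg hc, zero_mul]
      rw [Finset.sum_congr rfl (fun c _ => hterm c), Finset.sum_ite_eq]
      simp

end Existence

section FinalTheorem

section FinalTheorem

/-- The non-commutative set-multilinear formula size of the shifted tensor of `M` is at
least `PT-rank(M) / n^{d − log₂ d + 1}`. -/
theorem stmt16 {F : Type*} [Field F] (n d : ℕ) [NeZero n] (hd : 1 ≤ d)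
    (M : Matrix (Fin d → Fin n) (Fin d → Fin n) F) :
    (PTrank M : ℝ) / (n : ℝ) ^ ((d : ℝ) - Real.logb 2 d + 1) ≤
      (Lnc F (n * n) (d + 1) (shifted M) : ℝ) := by
  have hn : 1 ≤ n := Nat.one_le_iff_ne_zero.mpr (NeZero.ne n)
  -- the minimal formula size is attained
  obtain ⟨s0, hs0⟩ := exists_hasNCF (F := F) (n * n) (d + 1) (by omega) (shifted M)
  have hmem : HasNCF F (n * n) (d + 1) (shifted M) (Lnc F (n * n) (d + 1) (shifted M)) :=
    Nat.sInf_mem (⟨s0, hs0⟩ : {s | HasNCF F (n * n) (d + 1) (shifted M) s}.Nonempty)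
  set L := Lnc F (n * n) (d + 1) (shifted M) with hL
  -- main structural bound
  have hOKC := okc_of_hasNCF hn hmem true true
  have hPT : PTrank M ≤ L * n ^ (d + 1 - pen true true (d + 1)) :=
    ptrank_le_of_okc M hOKC
  -- numeric facts
  set p := pen true true (d + 1) with hp
  have hpval : p = 2 * (Nat.clog 2 (d + 1) / 2) + 1 := by rw [hp]; simp [pen]
  have hple : p ≤ d + 1 := pen_le (by omega)
  have hclogp : Nat.clog 2 (d + 1) ≤ p := by omega
  have hdpow : d < 2 ^ p := by
    have h1 : d + 1 ≤ 2 ^ Nat.clog 2 (d + 1) := Nat.le_pow_clog one_lt_two _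
    have h2 : 2 ^ Nat.clog 2 (d + 1) ≤ 2 ^ p := Nat.pow_le_pow_right (by norm_num) hclogp
    omega
  have hlogb : Real.logb 2 d ≤ (p : ℝ) := by
    have hcast : (d : ℝ) ≤ (2 : ℝ) ^ (p : ℕ) := by
      have : (d : ℝ) ≤ ((2 ^ p : ℕ) : ℝ) := by exact_mod_cast hdpow.le
      simpa [Nat.cast_pow] using this
    calc Real.logb 2 d ≤ Real.logb 2 ((2 : ℝ) ^ (p : ℕ)) := by
          apply Real.logb_le_logb_of_le (by norm_num) ?_ hcast
          exact_mod_cast Nat.lt_of_lt_of_le Nat.zero_lt_one hd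
      _ = (p : ℝ) := by
          rw [← Real.rpow_natCast 2 p, Real.logb_rpow (by norm_num) (by norm_num)]
  -- compare exponents
  have hE : ((d + 1 - p : ℕ) : ℝ) ≤ (d : ℝ) - Real.logb 2 d + 1 := by
    have : ((d + 1 - p : ℕ) : ℝ) = (d : ℝ) + 1 - (p : ℝ) := by
      rw [Nat.cast_sub hple]
      push_cast
      ring
    rw [this]
    linarith
  have hnR : (1 : ℝ) ≤ (n : ℝ) := by exact_mod_cast hn
  have hpow_le : ((n : ℝ) ^ ((d + 1 - p : ℕ) : ℕ) : ℝ) ≤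
      (n : ℝ) ^ ((d : ℝ) - Real.logb 2 d + 1) := by
    rw [← Real.rpow_natCast (n : ℝ) (d + 1 - p)]
    exact Real.rpow_le_rpow_of_exponent_le hnR hE
  have hPTR : (PTrank M : ℝ) ≤ (L : ℝ) * (n : ℝ) ^ ((d + 1 - p : ℕ) : ℕ) := by
    exact_mod_cast hPT
  have hDpos : (0 : ℝ) < (n : ℝ) ^ ((d : ℝ) - Real.logb 2 d + 1) :=
    Real.rpow_pos_of_pos (by exact_mod_cast Nat.lt_of_lt_of_le Nat.zero_lt_one hn) _
  rw [div_le_iff₀ hDpos]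
  calc (PTrank M : ℝ) ≤ (L : ℝ) * (n : ℝ) ^ ((d + 1 - p : ℕ) : ℕ) := hPTR
    _ ≤ (L : ℝ) * (n : ℝ) ^ ((d : ℝ) - Real.logb 2 d + 1) := by
        apply mul_le_mul_of_nonneg_left hpow_le (by positivity)


end FinalTheorem
end FinalTheorem
end

section
/- Let n be a prime, ω = e^{2πi/n}, d even with n > 2d, and let T be a d × d Cauchy matrix over F_n (every square submatrix of T is invertible). Define the n^d × n^d complex matrix W_T by (W_T)_{(i_1,…,i_d),(j_1,…,j_d)} = ω^{(i_1,…,i_d) T (j_1,…,j_d)^⊤}. Then for every κ ⊆ [d], the partial transpose W_T^{⊤_κ} has full rank n^d. -/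
open Matrix BigOperators

/-- `ω = e^{2πi/n}`, a primitive `n`-th root of unity. -/
noncomputable def omg (n : ℕ) : ℂ := Complex.exp (2 * Real.pi * Complex.I / n)
/-- The matrix `W_T` with entries `ω^{i⃗ T j⃗ᵀ}` (the bilinear form computed over `F_n`). -/
noncomputable def WT (n d : ℕ) (T : Matrix (Fin d) (Fin d) (ZMod n)) :
    Matrix (Fin d → Fin n) (Fin d → Fin n) ℂ :=
  fun i j => omg n ^ (∑ a : Fin d, ∑ b : Fin d,
    ((i a : ℕ) : ZMod n) * T a b * ((j b : ℕ) : ZMod n)).val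

/-! ### Auxiliary machinery -/

/-- The additive character `x ↦ ω^{x.val}` on `ZMod n`. -/
noncomputable def ee (n : ℕ) (x : ZMod n) : ℂ := omg n ^ x.val

/-- Cast `Fin n → ZMod n`. -/
def zz (n : ℕ) (t : Fin n) : ZMod n := ((t : ℕ) : ZMod n)

lemma omg_pow (n : ℕ) (hn : n ≠ 0) : omg n ^ n = 1 :=
  (Complex.isPrimitiveRoot_exp n hn).pow_eq_one

lemma omg_ne_one (n : ℕ) (hn : 1 < n) : omg n ≠ 1 :=
  (Complex.isPrimitiveRoot_exp n (by omega)).ne_one hn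

lemma ee_zero (n : ℕ) [NeZero n] : ee n 0 = 1 := by simp [ee]

lemma ee_add (n : ℕ) [NeZero n] (x y : ZMod n) : ee n (x + y) = ee n x * ee n y := by
  rw [ee, ee, ee, ZMod.val_add, ← pow_eq_pow_mod _ (omg_pow n (NeZero.ne n)), pow_add]

lemma ee_sum {ι : Type*} (n : ℕ) [NeZero n] (s : Finset ι) (f : ι → ZMod n) :
    ee n (∑ i ∈ s, f i) = ∏ i ∈ s, ee n (f i) := by
  classical
  induction s using Finset.induction with
  | empty => simp [ee_zero]
  | insert a s h ih => rw [Finset.sum_insert h, Finset.prod_insert h, ee_add, ih]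

lemma ee_mul_neg (n : ℕ) [NeZero n] (x : ZMod n) : ee n x * ee n (-x) = 1 := by
  rw [← ee_add]; simp [ee_zero]

lemma ee_conj (n : ℕ) [NeZero n] (x : ZMod n) : star (ee n x) = ee n (-x) := by
  rw [← starRingEnd_apply]
  have h1 : (starRingEnd ℂ) (omg n) = (omg n)⁻¹ := by
    rw [omg, ← Complex.exp_conj, ← Complex.exp_neg]
    congr 1
    simp only [map_div₀, _root_.map_mul, Complex.conj_I, Complex.conj_ofReal, map_ofNat, map_natCast]
    ring
  have h2 : (ee n x)⁻¹ = ee n (-x) := inv_eq_of_mul_eq_one_right (ee_mul_neg n x)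
  rw [ee, map_pow, h1, inv_pow, ← ee, h2]

lemma zz_bijective (n : ℕ) [NeZero n] : Function.Bijective (zz n) := by
  constructor
  · intro a b h
    have := congrArg ZMod.val h
    rw [zz, zz, ZMod.val_cast_of_lt a.isLt, ZMod.val_cast_of_lt b.isLt] at this
    exact Fin.ext this
  · intro x
    exact ⟨⟨x.val, ZMod.val_lt x⟩, ZMod.natCast_rightInverse x⟩

lemma sum_ee_univ (n : ℕ) [NeZero n] (hn : 1 < n) : ∑ x : ZMod n, ee n x = 0 := by
  have h : ∑ x : ZMod n, ee n x = ∑ t : Fin n, omg n ^ (t : ℕ) :=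
    (Fintype.sum_bijective (zz n) (zz_bijective n) _ _ (fun t => by
      rw [ee, zz, ZMod.val_cast_of_lt t.isLt])).symm
  rw [h, Fin.sum_univ_eq_sum_range (fun k => omg n ^ k), geom_sum_eq (omg_ne_one n hn),
    omg_pow n (by omega), sub_self, zero_div]

lemma sum_ee_mul (n : ℕ) (hp : n.Prime) (v : ZMod n) :
    ∑ t : Fin n, ee n (zz n t * v) = if v = 0 then (n : ℂ) else 0 := by
  haveI : Fact n.Prime := ⟨hp⟩
  rw [Fintype.sum_bijective (zz n) (zz_bijective n) _ (fun x => ee n (x * v)) (fun t => rfl)]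
  by_cases hv : v = 0
  · simp [hv, ee_zero, Finset.card_univ, ZMod.card]
  · rw [if_neg hv]
    rw [Fintype.sum_bijective (fun x : ZMod n => x * v) (Equiv.mulRight₀ v hv).bijective
      _ (fun x => ee n x) (fun x => rfl)]
    exact sum_ee_univ n hp.one_lt

/-! ### The exponent bilinear form and its decomposition -/

/-- Exponent of the partially transposed matrix. -/
def Bq (n d : ℕ) (T : Matrix (Fin d) (Fin d) (ZMod n)) (κ : Finset (Fin d))
    (i j : Fin d → Fin n) : ZMod n :=
  ∑ a, ∑ b, (if a ∈ κ then zz n (j a) else zz n (i a)) * T a b *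
    (if b ∈ κ then zz n (i b) else zz n (j b))

def wv (n d : ℕ) (i i' : Fin d → Fin n) (b : Fin d) : ZMod n := zz n (i b) - zz n (i' b)

def vv (n d : ℕ) (T : Matrix (Fin d) (Fin d) (ZMod n)) (κ : Finset (Fin d))
    (i i' : Fin d → Fin n) (m : Fin d) : ZMod n :=
  if m ∈ κ then ∑ b, (if b ∈ κ then T m b * wv n d i i' b else 0)
  else ∑ a, (if a ∈ κ then 0 else wv n d i i' a * T a m)

def qq (n d : ℕ) (T : Matrix (Fin d) (Fin d) (ZMod n)) (κ : Finset (Fin d))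
    (i i' : Fin d → Fin n) : ZMod n :=
  ∑ a, ∑ b, if a ∉ κ ∧ b ∈ κ then
    zz n (i a) * T a b * zz n (i b) - zz n (i' a) * T a b * zz n (i' b) else 0

lemma Bq_diff (n d : ℕ) (T : Matrix (Fin d) (Fin d) (ZMod n)) (κ : Finset (Fin d))
    (i i' j : Fin d → Fin n) :
    Bq n d T κ i j - Bq n d T κ i' j =
      (∑ m, zz n (j m) * vv n d T κ i i' m) + qq n d T κ i i' := by
  classical
  have expand : ∀ m, zz n (j m) * vv n d T κ i i' m =
      (∑ k, if m ∈ κ ∧ k ∈ κ then zz n (j m) * (T m k * wv n d i i' k) else 0) +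
      (∑ k, if m ∉ κ ∧ k ∉ κ then zz n (j m) * (wv n d i i' k * T k m) else 0) := by
    intro m
    by_cases hm : m ∈ κ
    · rw [vv, if_pos hm, Finset.mul_sum, ← Finset.sum_add_distrib]
      refine Finset.sum_congr rfl fun k _ => ?_
      by_cases hk : k ∈ κ <;> simp [hm, hk]
    · rw [vv, if_neg hm, Finset.mul_sum, ← Finset.sum_add_distrib]
      refine Finset.sum_congr rfl fun k _ => ?_
      by_cases hk : k ∈ κ <;> simp [hm, hk]
  rw [Finset.sum_congr rfl (fun m _ => expand m), Finset.sum_add_distrib]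
  rw [Finset.sum_comm (s := Finset.univ) (t := Finset.univ)
    (f := fun m k => if m ∉ κ ∧ k ∉ κ then zz n (j m) * (wv n d i i' k * T k m) else 0)]
  rw [Bq, Bq, ← Finset.sum_sub_distrib, qq, ← Finset.sum_add_distrib, ← Finset.sum_add_distrib]
  refine Finset.sum_congr rfl fun a _ => ?_
  rw [← Finset.sum_sub_distrib, ← Finset.sum_add_distrib, ← Finset.sum_add_distrib]
  refine Finset.sum_congr rfl fun b _ => ?_
  by_cases ha : a ∈ κ <;> by_cases hb : b ∈ κ <;> simp [ha, hb, wv] <;> ring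

/-- For a prime `n`, `d` even with `n > 2d`, and `T` a `d × d` Cauchy matrix over `F_n`
(every square submatrix invertible), every partial transpose `W_T^{⊤_κ}` has full rank
`n^d`. -/
theorem stmt17 (n d : ℕ) (hp : n.Prime) (hde : Even d) (hnd : 2 * d < n)
    (T : Matrix (Fin d) (Fin d) (ZMod n))
    (hT : ∀ (s : ℕ) (r c : Fin s → Fin d), Function.Injective r → Function.Injective c →
      IsUnit (T.submatrix r c).det)
    (κ : Finset (Fin d)) :
    (ptrans κ (WT n d T)).rank = n ^ d := by
  classical
  haveI : Fact n.Prime := ⟨hp⟩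
  haveI : NeZero n := ⟨hp.ne_zero⟩
  set M := ptrans κ (WT n d T) with hMdef
  have hM : ∀ i j, M i j = ee n (Bq n d T κ i j) := by
    intro i j
    rw [hMdef, ptrans, WT, ee, Bq]
    congr 2
    refine Finset.sum_congr rfl fun a _ => Finset.sum_congr rfl fun b _ => ?_
    by_cases ha : a ∈ κ <;> by_cases hb : b ∈ κ <;> simp [ha, hb, zz]
  have key : M * M.conjTranspose = ((n : ℂ) ^ d) • 1 := by
    ext i i'
    rw [Matrix.mul_apply]
    simp only [Matrix.conjTranspose_apply, hM, ee_conj]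
    have hsum : ∀ j, ee n (Bq n d T κ i j) * ee n (-Bq n d T κ i' j) =
        ee n (Bq n d T κ i j - Bq n d T κ i' j) := by
      intro j; rw [← ee_add]; ring_nf
    rw [Finset.sum_congr rfl (fun j _ => hsum j)]
    by_cases hii : i = i'
    · subst hii
      simp only [sub_self, ee_zero, Finset.sum_const, Finset.card_univ, Fintype.card_fun,
        Fintype.card_fin, nsmul_eq_mul, mul_one, Matrix.smul_apply, Matrix.one_apply_eq,
        smul_eq_mul]
      push_cast
      ring
    · rw [Matrix.smul_apply, Matrix.one_apply_ne hii, smul_zero]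
      have hrw : ∀ j, Bq n d T κ i j - Bq n d T κ i' j =
          (∑ m, zz n (j m) * vv n d T κ i i' m) + qq n d T κ i i' := fun j => Bq_diff ..
      simp only [hrw]
      have : ∀ j : Fin d → Fin n,
          ee n ((∑ m, zz n (j m) * vv n d T κ i i' m) + qq n d T κ i i') =
          ee n (qq n d T κ i i') * ∏ m, ee n (zz n (j m) * vv n d T κ i i' m) := by
        intro j
        rw [ee_add, ee_sum, mul_comm]
      simp only [this]
      rw [← Finset.mul_sum]
      have hfac : ∑ j : Fin d → Fin n, ∏ m, ee n (zz n (j m) * vv n d T κ i i' m) =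
          ∏ m, ∑ t : Fin n, ee n (zz n t * vv n d T κ i i' m) := by
        rw [Finset.prod_univ_sum (fun _ => Finset.univ)
          (fun m t => ee n (zz n t * vv n d T κ i i' m)), Fintype.piFinset_univ]
      rw [hfac]
      -- find a coordinate where v is nonzero
      have hex : ∃ m, vv n d T κ i i' m ≠ 0 := by
        by_contra hcon
        push_neg at hcon
        apply hii
        -- first: w vanishes on κ
        have hwκ : ∀ b ∈ κ, wv n d i i' b = 0 := by
          set r : Fin κ.card → Fin d := fun t => ((κ.equivFin.symm t : {x // x ∈ κ}) : Fin d)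
            with hr
          have hrinj : Function.Injective r := fun a b hab =>
            κ.equivFin.symm.injective (Subtype.ext hab)
          have hrmem : ∀ t, r t ∈ κ := fun t => (κ.equivFin.symm t).2
          have hS := hT κ.card r r hrinj hrinj
          have hsum' : ∀ (f : Fin d → ZMod n), ∑ t, f (r t) = ∑ b ∈ κ, f b := by
            intro f
            rw [← Finset.sum_coe_sort κ f]
            exact Equiv.sum_comp κ.equivFin.symm (fun b : {x // x ∈ κ} => f ↑b)
          have hmv : (T.submatrix r r) *ᵥ (fun t => wv n d i i' (r t)) = 0 := by
            funext a
            have h0 := hcon (r a)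
            rw [vv, if_pos (hrmem a)] at h0
            simp only [Matrix.mulVec, dotProduct, Matrix.submatrix_apply,
              Pi.zero_apply]
            rw [hsum' (fun b => T (r a) b * wv n d i i' b)]
            rw [← h0, Finset.sum_ite_mem, Finset.univ_inter]
          haveI := (T.submatrix r r).invertibleOfIsUnitDet hS
          have hu : (fun t => wv n d i i' (r t)) = 0 := by
            have h0 : ⅟(T.submatrix r r) *ᵥ ((T.submatrix r r) *ᵥ
                (fun t => wv n d i i' (r t))) = (fun t => wv n d i i' (r t)) := by
              rw [Matrix.mulVec_mulVec, invOf_mul_self, Matrix.one_mulVec]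
            rw [hmv, Matrix.mulVec_zero] at h0
            exact h0.symm
          intro b hb
          have : r (κ.equivFin ⟨b, hb⟩) = b := by
            rw [hr]; simp
          rw [← this]
          exact congrFun hu (κ.equivFin ⟨b, hb⟩)
        -- second: w vanishes off κ
        have hwκc : ∀ b ∉ κ, wv n d i i' b = 0 := by
          set r : Fin κᶜ.card → Fin d := fun t => ((κᶜ.equivFin.symm t : {x // x ∈ κᶜ}) : Fin d)
            with hr
          have hrinj : Function.Injective r := fun a b hab =>
            κᶜ.equivFin.symm.injective (Subtype.ext hab)
          have hrmem : ∀ t, r t ∈ κᶜ := fun t => (κᶜ.equivFin.symm t).2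
          have hS := hT κᶜ.card r r hrinj hrinj
          have hsum' : ∀ (f : Fin d → ZMod n), ∑ t, f (r t) = ∑ b ∈ κᶜ, f b := by
            intro f
            rw [← Finset.sum_coe_sort κᶜ f]
            exact Equiv.sum_comp κᶜ.equivFin.symm (fun b : {x // x ∈ κᶜ} => f ↑b)
          have hmv : (fun t => wv n d i i' (r t)) ᵥ* (T.submatrix r r) = 0 := by
            funext m
            have h0 := hcon (r m)
            have hrm : r m ∉ κ := Finset.mem_compl.mp (hrmem m)
            rw [vv, if_neg hrm] at h0
            simp only [Matrix.vecMul, dotProduct, Matrix.submatrix_apply,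
              Pi.zero_apply]
            rw [hsum' (fun a => wv n d i i' a * T a (r m))]
            rw [← h0]
            rw [show κᶜ = Finset.univ ∩ κᶜ from (Finset.univ_inter κᶜ).symm,
              ← Finset.sum_ite_mem Finset.univ κᶜ (fun a => wv n d i i' a * T a (r m))]
            refine Finset.sum_congr rfl fun a _ => ?_
            by_cases haκ : a ∈ κ <;> simp [haκ]
          haveI := (T.submatrix r r).invertibleOfIsUnitDet hS
          have hu : (fun t => wv n d i i' (r t)) = 0 := by
            have h0 : ((fun t => wv n d i i' (r t)) ᵥ* (T.submatrix r r)) ᵥ*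
                ⅟(T.submatrix r r) = (fun t => wv n d i i' (r t)) := by
              rw [Matrix.vecMul_vecMul, mul_invOf_self, Matrix.vecMul_one]
            rw [hmv, Matrix.zero_vecMul] at h0
            exact h0.symm
          intro b hb
          have hb' : b ∈ κᶜ := Finset.mem_compl.mpr hb
          have : r (κᶜ.equivFin ⟨b, hb'⟩) = b := by
            rw [hr]; simp
          rw [← this]
          exact congrFun hu (κᶜ.equivFin ⟨b, hb'⟩)
        funext b
        have hw0 : wv n d i i' b = 0 := by
          by_cases hb : b ∈ κ
          · exact hwκ b hb
          · exact hwκc b hb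
        rw [wv, sub_eq_zero, zz, zz] at hw0
        have := congrArg ZMod.val hw0
        rw [ZMod.val_cast_of_lt (i b).isLt, ZMod.val_cast_of_lt (i' b).isLt] at this
        exact Fin.ext this
      obtain ⟨m, hm⟩ := hex
      have : (∏ m, ∑ t : Fin n, ee n (zz n t * vv n d T κ i i' m)) = 0 := by
        apply Finset.prod_eq_zero (Finset.mem_univ m)
        rw [sum_ee_mul n hp, if_neg hm]
      rw [this, mul_zero]
  -- conclude full rank
  have hn0 : ((n : ℂ)) ^ d ≠ 0 := pow_ne_zero _ (Nat.cast_ne_zero.mpr hp.ne_zero)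
  have hinv : M * (((n : ℂ) ^ d)⁻¹ • M.conjTranspose) = 1 := by
    rw [Matrix.mul_smul, key, smul_smul, inv_mul_cancel₀ hn0, one_smul]
  haveI := invertibleOfRightInverse _ _ hinv
  have hMu : IsUnit M := isUnit_of_invertible M
  rw [Matrix.rank_of_isUnit M hMu, Fintype.card_fun, Fintype.card_fin, Fintype.card_fin]
end
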